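/- Let D ⊂ ℝⁿ be an open set and D₁ ⊆ D measurable. Let h : [0,∞) → [0,∞) be continuous, strictly increasing, with h(0) = 0 and h(t) → ∞ as t → ∞; let g be its inverse, F(a) = ∫_0^a h, F*(b) = ∫_0^b g, and define V(p) = h(|p|)p/|p| for p ≠ 0, V(0) = 0. Let u, v : D → ℝ be locally Lipschitz with F(|∇u|), F(|∇v|), F*(h(|∇v|)) integrable on D₁. If ∫_{D₁} ⟨V(∇v), ∇v⟩ dx ≤ ∫_{D₁} ⟨V(∇v), ∇u⟩ dx, then ∫_{D₁} F(|∇v|) dx ≤ ∫_{D₁} F(|∇u|) dx. -/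

import Mathlib

open Set Filter MeasureTheory
open scoped RealInnerProductSpace Topology Classical
noncomputable section

/-- The flux field `V(p) = h(|p|) p/|p|` for `p ≠ 0`, `V(0) = 0`. -/
def flux {n : ℕ} (h : ℝ → ℝ) (p : EuclideanSpace ℝ (Fin n)) : EuclideanSpace ℝ (Fin n) :=
  if p = 0 then 0 else (h ‖p‖ / ‖p‖) • p

/-- Young's equality `F(a) + F*(h(a)) = a · h(a)` for a strictly increasing continuous
function and its inverse, with global regularity assumptions. Proven by computing the
volume of the region between the graph of `h` and the horizontal line `h a` in two ways. -/
lemma young_eq_aux (h g : ℝ → ℝ) (hcont : Continuous h)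
    (hmono : StrictMonoOn h (Ici 0))
    (hnonneg : ∀ t ∈ Ici (0:ℝ), 0 ≤ h t)
    (hg1 : ∀ t ∈ Ici (0:ℝ), g (h t) = t)
    (hg2 : ∀ t ∈ Ici (0:ℝ), 0 ≤ g t ∧ h (g t) = t)
    (hgmono : Monotone g)
    {a : ℝ} (ha : 0 ≤ a) :
    (∫ τ in (0:ℝ)..a, h τ) + (∫ τ in (0:ℝ)..h a, g τ) = a * h a := by
  have hha : 0 ≤ h a := hnonneg a ha
  have h_int : IntegrableOn h (Ioo 0 a) :=
    ((hcont.continuousOn).integrableOn_compact isCompact_Icc).mono_set Ioo_subset_Icc_self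
  have g_int : IntegrableOn g (Ioo 0 (h a)) :=
    ((hgmono.monotoneOn _).integrableOn_isCompact
      (isCompact_Icc (a := (0:ℝ)) (b := h a))).mono_set Ioo_subset_Icc_self
  have hR1 := volume_regionBetween_eq_integral h_int
    (integrableOn_const measure_Ioo_lt_top.ne) measurableSet_Ioo
    (fun t ht => (hmono.monotoneOn) (le_of_lt ht.1) ha ht.2.le)
  have hR2 := volume_regionBetween_eq_integral
    (integrableOn_const measure_Ioo_lt_top.ne) g_int measurableSet_Ioo
    (fun τ (hτ : τ ∈ Ioo (0:ℝ) (h a)) => (hg2 τ hτ.1.le).1)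
  simp only [Pi.sub_apply] at hR1 hR2
  have hswap : Prod.swap ⁻¹' (regionBetween h (fun _ => h a) (Ioo 0 a))
      = regionBetween (fun _ => (0:ℝ)) g (Ioo 0 (h a)) := by
    ext ⟨τ, t⟩
    simp only [regionBetween, mem_preimage, Prod.swap_prod_mk, mem_setOf_eq, mem_Ioo]
    constructor
    · rintro ⟨⟨ht0, hta⟩, hhτ, hτha⟩
      have hτ0 : 0 < τ := lt_of_le_of_lt (hnonneg t ht0.le) hhτ
      have hgτ : 0 ≤ g τ ∧ h (g τ) = τ := hg2 τ hτ0.le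
      refine ⟨⟨hτ0, hτha⟩, ht0, ?_⟩
      have : h t < h (g τ) := by rw [hgτ.2]; exact hhτ
      exact (hmono.lt_iff_lt ht0.le hgτ.1).mp this
    · rintro ⟨⟨hτ0, hτha⟩, ht0, htgτ⟩
      have hgτ : 0 ≤ g τ ∧ h (g τ) = τ := hg2 τ hτ0.le
      have hta : t < a := by
        have h1 : g τ ≤ g (h a) := hgmono hτha.le
        rw [hg1 a ha] at h1
        exact lt_of_lt_of_le htgτ h1
      refine ⟨⟨ht0, hta⟩, ?_, hτha⟩
      have : h t < h (g τ) := hmono ht0.le hgτ.1 htgτ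
      rwa [hgτ.2] at this
  have hmeas : MeasurableSet (regionBetween h (fun _ => h a) (Ioo 0 a)) :=
    measurableSet_regionBetween hcont.measurable measurable_const measurableSet_Ioo
  have hvol := (Measure.measurePreserving_swap (μ := (volume : Measure ℝ))
    (ν := (volume : Measure ℝ))).measure_preimage hmeas.nullMeasurableSet
  rw [hswap, hR1, hR2] at hvol
  have hI1 : 0 ≤ ∫ t in Ioo (0:ℝ) a, (h a - h t) :=
    setIntegral_nonneg measurableSet_Ioo (fun t ht => by
      have := (hmono.monotoneOn) (le_of_lt ht.1) ha ht.2.le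
      linarith)
  have hI2 : 0 ≤ ∫ τ in Ioo (0:ℝ) (h a), (g τ - 0) :=
    setIntegral_nonneg measurableSet_Ioo (fun τ hτ => by
      have := (hg2 τ hτ.1.le).1; linarith)
  have heq : (∫ τ in Ioo (0:ℝ) (h a), (g τ - 0))
      = ∫ t in Ioo (0:ℝ) a, (h a - h t) :=
    (ENNReal.ofReal_eq_ofReal_iff hI2 hI1).mp hvol
  have e1 : (∫ τ in (0:ℝ)..a, h τ) = ∫ t in Ioo (0:ℝ) a, h t := by
    rw [intervalIntegral.integral_of_le ha, ← integral_Ioc_eq_integral_Ioo]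
  have e2 : (∫ τ in (0:ℝ)..h a, g τ) = ∫ τ in Ioo (0:ℝ) (h a), (g τ - 0) := by
    rw [intervalIntegral.integral_of_le hha, ← integral_Ioc_eq_integral_Ioo]
    simp
  have e3 : (∫ t in Ioo (0:ℝ) a, (h a - h t))
      = a * h a - ∫ t in Ioo (0:ℝ) a, h t := by
    rw [integral_sub (integrableOn_const (C := h a) measure_Ioo_lt_top.ne) h_int,
      setIntegral_const, measureReal_def, Real.volume_Ioo, smul_eq_mul,
      ENNReal.toReal_ofReal (by linarith)]
    ring_nf
  rw [e1, e2, heq, e3]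
  ring

/-- For an increasing `h` on `[0,∞)`: `h(a)(b-a) ≤ F(b) - F(a)`. -/
lemma young_lb_aux (h : ℝ → ℝ) (hcont : ContinuousOn h (Ici 0))
    (hmono : StrictMonoOn h (Ici 0)) {a b : ℝ} (ha : 0 ≤ a) (hb : 0 ≤ b) :
    h a * (b - a) ≤ (∫ τ in (0:ℝ)..b, h τ) - ∫ τ in (0:ℝ)..a, h τ := by
  have hint : ∀ c d : ℝ, 0 ≤ c → 0 ≤ d → IntervalIntegrable h volume c d := by
    intro c d hc hd
    exact (hcont.mono (fun x hx => le_trans (le_min hc hd) hx.1)).intervalIntegrable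
  have hsub : (∫ τ in (0:ℝ)..b, h τ) - ∫ τ in (0:ℝ)..a, h τ = ∫ τ in a..b, h τ :=
    intervalIntegral.integral_interval_sub_left (hint 0 b le_rfl hb) (hint 0 a le_rfl ha)
  rw [hsub]
  rcases le_total a b with hab | hba
  · have hm : ∫ τ in a..b, (h a) ≤ ∫ τ in a..b, h τ :=
      intervalIntegral.integral_mono_on hab intervalIntegrable_const (hint a b ha hb)
        (fun x hx => (hmono.monotoneOn) ha (le_trans ha hx.1) hx.1)
    rw [intervalIntegral.integral_const, smul_eq_mul] at hm
    linarith [hm, (by ring : (b - a) * h a = h a * (b - a))]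
  · have hm : ∫ τ in b..a, h τ ≤ ∫ τ in b..a, (h a) :=
      intervalIntegral.integral_mono_on hba (hint b a hb ha) intervalIntegrable_const
        (fun x hx => (hmono.monotoneOn) (le_trans hb hx.1) ha hx.2)
    rw [intervalIntegral.integral_const, smul_eq_mul] at hm
    have hsym : ∫ τ in a..b, h τ = - ∫ τ in b..a, h τ := intervalIntegral.integral_symm b a
    rw [hsym]
    linarith [hm, (by ring : (a - b) * h a = -(h a * (b - a)))]

/-- (Energy comparison step in the proof of the comparison principle.)
Let `D ⊂ ℝⁿ` be open and `D₁ ⊆ D` measurable. Let `h : [0,∞) → [0,∞)` be continuous,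
strictly increasing, `h(0) = 0`, `h(t) → ∞`, with inverse `g`; `F(a) = ∫_0^a h`,
`F*(b) = ∫_0^b g`, `V(p) = h(|p|)p/|p|` (`V(0) = 0`). If `u, v` are locally Lipschitz on `D`
with `F(|∇u|)`, `F(|∇v|)`, `F*(h(|∇v|))` integrable on `D₁`, and
`∫_{D₁} ⟨V(∇v), ∇v⟩ ≤ ∫_{D₁} ⟨V(∇v), ∇u⟩`, then
`∫_{D₁} F(|∇v|) ≤ ∫_{D₁} F(|∇u|)`. -/
theorem statement15 {n : ℕ} (D D₁ : Set (EuclideanSpace ℝ (Fin n)))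
    (hD : IsOpen D) (hD₁ : MeasurableSet D₁) (hsub : D₁ ⊆ D)
    (h : ℝ → ℝ) (hcont : ContinuousOn h (Ici 0))
    (hmono : StrictMonoOn h (Ici 0)) (h0 : h 0 = 0)
    (hnonneg : ∀ t ∈ Ici (0:ℝ), 0 ≤ h t)
    (htop : Tendsto h atTop atTop)
    (g : ℝ → ℝ)
    (hg1 : ∀ t ∈ Ici (0:ℝ), g (h t) = t)
    (hg2 : ∀ t ∈ Ici (0:ℝ), 0 ≤ g t ∧ h (g t) = t)
    (u v : EuclideanSpace ℝ (Fin n) → ℝ)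
    (hu_lip : ∀ x ∈ D, ∃ K : NNReal, ∃ s ∈ 𝓝 x, LipschitzOnWith K u s)
    (hv_lip : ∀ x ∈ D, ∃ K : NNReal, ∃ s ∈ 𝓝 x, LipschitzOnWith K v s)
    (hFu_int : IntegrableOn (fun x => ∫ τ in (0:ℝ)..‖gradient u x‖, h τ) D₁)
    (hFv_int : IntegrableOn (fun x => ∫ τ in (0:ℝ)..‖gradient v x‖, h τ) D₁)
    (hFsv_int : IntegrableOn (fun x => ∫ τ in (0:ℝ)..h ‖gradient v x‖, g τ) D₁)
    (hkey : ∫ x in D₁, ⟪flux h (gradient v x), gradient v x⟫ ≤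
      ∫ x in D₁, ⟪flux h (gradient v x), gradient u x⟫) :
    ∫ x in D₁, (∫ τ in (0:ℝ)..‖gradient v x‖, h τ) ≤
      ∫ x in D₁, (∫ τ in (0:ℝ)..‖gradient u x‖, h τ) := by
  -- monotonicity of the inverse `g` on `[0,∞)`
  have gmono : MonotoneOn g (Ici 0) := by
    intro s hs t ht hst
    refine (hmono.le_iff_le (hg2 s hs).1 (hg2 t ht).1).mp ?_
    rw [(hg2 s hs).2, (hg2 t ht).2]; exact hst
  -- globally defined modifications of `h` and `g`
  set h' : ℝ → ℝ := fun t => h (max t 0) with hh'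
  set g' : ℝ → ℝ := fun t => g (max t 0) with hg'
  have hmax : ∀ t : ℝ, 0 ≤ t → max t 0 = t := fun t ht => max_eq_left ht
  have hh'eq : ∀ t : ℝ, 0 ≤ t → h' t = h t := fun t ht => by
    simp only [hh']; rw [hmax t ht]
  have hg'eq : ∀ t : ℝ, 0 ≤ t → g' t = g t := fun t ht => by
    simp only [hg']; rw [hmax t ht]
  have hc' : Continuous h' :=
    hcont.comp_continuous (continuous_id.max continuous_const)
      (fun x => mem_Ici.2 (le_max_right x 0))
  have hm' : StrictMonoOn h' (Ici 0) := by
    intro x hx y hy hxy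
    rw [hh'eq x hx, hh'eq y hy]; exact hmono hx hy hxy
  have hn' : ∀ t ∈ Ici (0:ℝ), 0 ≤ h' t := fun t ht => by
    rw [hh'eq t ht]; exact hnonneg t ht
  have hg1' : ∀ t ∈ Ici (0:ℝ), g' (h' t) = t := fun t ht => by
    rw [hh'eq t ht, hg'eq _ (hnonneg t ht)]; exact hg1 t ht
  have hg2' : ∀ t ∈ Ici (0:ℝ), 0 ≤ g' t ∧ h' (g' t) = t := fun t ht => by
    rw [hg'eq t ht, hh'eq _ (hg2 t ht).1]; exact hg2 t ht
  have hgm' : Monotone g' := fun x y hxy =>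
    gmono (le_max_right x 0) (le_max_right y 0) (max_le_max hxy le_rfl)
  -- transfer of interval integrals
  have htrans_h : ∀ c : ℝ, 0 ≤ c → (∫ τ in (0:ℝ)..c, h τ) = ∫ τ in (0:ℝ)..c, h' τ := by
    intro c hc
    refine intervalIntegral.integral_congr (fun τ hτ => ?_)
    rw [uIcc_of_le hc] at hτ
    exact (hh'eq τ hτ.1).symm
  have htrans_g : ∀ c : ℝ, 0 ≤ c → (∫ τ in (0:ℝ)..c, g τ) = ∫ τ in (0:ℝ)..c, g' τ := by
    intro c hc
    refine intervalIntegral.integral_congr (fun τ hτ => ?_)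
    rw [uIcc_of_le hc] at hτ
    exact (hg'eq τ hτ.1).symm
  -- Young's equality for `h`, `g`
  have young : ∀ c : ℝ, 0 ≤ c →
      (∫ τ in (0:ℝ)..c, h τ) + (∫ τ in (0:ℝ)..h c, g τ) = c * h c := by
    intro c hc
    have := young_eq_aux h' g' hc' hm' hn' hg1' hg2' hgm' hc
    rw [htrans_h c hc, htrans_g (h c) (hnonneg c hc), ← hh'eq c hc] at *
    exact this
  -- pointwise inner product identities
  have P1 : ∀ p : EuclideanSpace ℝ (Fin n), ⟪flux h p, p⟫ = h ‖p‖ * ‖p‖ := by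
    intro p
    by_cases hp : p = 0
    · simp [flux, hp, h0]
    · have hnp : ‖p‖ ≠ 0 := norm_ne_zero_iff.2 hp
      simp only [flux, if_neg hp, real_inner_smul_left, real_inner_self_eq_norm_mul_norm]
      field_simp
  have P2 : ∀ p q : EuclideanSpace ℝ (Fin n), ⟪flux h p, q⟫ ≤ h ‖p‖ * ‖q‖ := by
    intro p q
    by_cases hp : p = 0
    · simp [flux, hp, h0]
    · have hnp : ‖p‖ ≠ 0 := norm_ne_zero_iff.2 hp
      simp only [flux, if_neg hp, real_inner_smul_left]
      have h1 : ⟪p, q⟫ ≤ ‖p‖ * ‖q‖ := real_inner_le_norm p q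
      have h2 : 0 ≤ h ‖p‖ / ‖p‖ := div_nonneg (hnonneg _ (norm_nonneg _)) (norm_nonneg _)
      calc h ‖p‖ / ‖p‖ * ⟪p, q⟫ ≤ h ‖p‖ / ‖p‖ * (‖p‖ * ‖q‖) :=
            mul_le_mul_of_nonneg_left h1 h2
        _ = h ‖p‖ * ‖q‖ := by field_simp
  -- pointwise equality for the "self" inner product
  have eqA : ∀ x, ⟪flux h (gradient v x), gradient v x⟫
      = (∫ τ in (0:ℝ)..‖gradient v x‖, h τ) + ∫ τ in (0:ℝ)..h ‖gradient v x‖, g τ := by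
    intro x
    rw [P1, young ‖gradient v x‖ (norm_nonneg _)]
    ring
  have intA : IntegrableOn (fun x => ⟪flux h (gradient v x), gradient v x⟫) D₁ :=
    (hFv_int.add hFsv_int).congr (ae_of_all _ (fun x => (eqA x).symm))
  -- pointwise inequality for the "cross" inner product
  have ineqB : ∀ x ∈ D₁, ⟪flux h (gradient v x), gradient u x⟫
      ≤ ((∫ τ in (0:ℝ)..‖gradient u x‖, h τ) - (∫ τ in (0:ℝ)..‖gradient v x‖, h τ))
        + ⟪flux h (gradient v x), gradient v x⟫ := by
    intro x _
    have hCS := P2 (gradient v x) (gradient u x)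
    have hlb := young_lb_aux h hcont hmono (norm_nonneg (gradient v x))
      (norm_nonneg (gradient u x))
    have hself := P1 (gradient v x)
    have hid : h ‖gradient v x‖ * ‖gradient u x‖
        = h ‖gradient v x‖ * (‖gradient u x‖ - ‖gradient v x‖)
          + h ‖gradient v x‖ * ‖gradient v x‖ := by ring
    linarith
  by_cases hB : IntegrableOn (fun x => ⟪flux h (gradient v x), gradient u x⟫) D₁
  · have hmono' := setIntegral_mono_on hB ((hFu_int.sub hFv_int).add intA) hD₁ ineqB
    have hsplit : (∫ x in D₁, (((∫ τ in (0:ℝ)..‖gradient u x‖, h τ)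
          - (∫ τ in (0:ℝ)..‖gradient v x‖, h τ))
          + ⟪flux h (gradient v x), gradient v x⟫))
        = ((∫ x in D₁, (∫ τ in (0:ℝ)..‖gradient u x‖, h τ))
          - ∫ x in D₁, (∫ τ in (0:ℝ)..‖gradient v x‖, h τ))
          + ∫ x in D₁, ⟪flux h (gradient v x), gradient v x⟫ := by
      have h1 := integral_add (μ := volume.restrict D₁) (hFu_int.sub hFv_int) intA
      have h2 := integral_sub (μ := volume.restrict D₁) hFu_int hFv_int
      simp only [Pi.add_apply, Pi.sub_apply] at h1 h2
      rw [h1, h2]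
    simp only [Pi.add_apply, Pi.sub_apply] at hmono'
    rw [hsplit] at hmono'
    linarith
  · rw [integral_undef hB] at hkey
    have hA_split : (∫ x in D₁, ⟪flux h (gradient v x), gradient v x⟫)
        = (∫ x in D₁, (∫ τ in (0:ℝ)..‖gradient v x‖, h τ))
          + ∫ x in D₁, (∫ τ in (0:ℝ)..h ‖gradient v x‖, g τ) := by
      have h1 := integral_add (μ := volume.restrict D₁) hFv_int hFsv_int
      rw [integral_congr_ae (ae_of_all _ eqA), h1]
    have hGs_nonneg : 0 ≤ ∫ x in D₁, (∫ τ in (0:ℝ)..h ‖gradient v x‖, g τ) :=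
      setIntegral_nonneg hD₁ (fun x _ =>
        intervalIntegral.integral_nonneg (hnonneg _ (norm_nonneg _))
          (fun τ hτ => (hg2 τ hτ.1).1))
    have hFu_nonneg : 0 ≤ ∫ x in D₁, (∫ τ in (0:ℝ)..‖gradient u x‖, h τ) :=
      setIntegral_nonneg hD₁ (fun x _ =>
        intervalIntegral.integral_nonneg (norm_nonneg _)
          (fun τ hτ => hnonneg τ hτ.1))
    linarith
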